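/- Let N̂ ⊆ X be finite with |N̂| ≥ 2, let u ∈ X \ N̂, and let w ∈ N̂. Then C(u, w, N̂ ∪ {u}) = min over v ∈ N̂ \ {w} of (c(u, v) + C(v, w, N̂)). -/

import Mathlib

noncomputable section

/-- Sum of `c` over consecutive pairs of a list. -/
def pathCost {X : Type*} (c : X → X → ℝ) : List X → ℝ
  | [] => 0
  | [_] => 0
  | a :: b :: rest => c a b + pathCost c (b :: rest)

/-- `tourCost c v w S`: the minimum, over all lists starting at `v`, ending at `w`, and
containing each element of `S` exactly once, of the sum of `c` over consecutive pairs
(as an infimum of the finite nonempty set of such costs). -/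
def tourCost {X : Type*} (c : X → X → ℝ) (v w : X) (S : Finset X) : ℝ :=
  sInf (pathCost c '' {p : List X |
    p.head? = some v ∧ p.getLast? = some w ∧ p.Nodup ∧ ∀ x, x ∈ p ↔ x ∈ S})

namespace TourAux

variable {X : Type*}

def valid (v w : X) (S : Finset X) : Set (List X) :=
  {p : List X | p.head? = some v ∧ p.getLast? = some w ∧ p.Nodup ∧ ∀ x, x ∈ p ↔ x ∈ S}

lemma valid_finite (v w : X) (S : Finset X) : (valid v w S).Finite := by
  apply Set.Finite.subset (S.toList.permutations.finite_toSet)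
  rintro p ⟨-, -, hnd, hmem⟩
  simp only [List.coe_toFinset, Set.mem_setOf_eq, List.mem_permutations]
  rw [List.perm_ext_iff_of_nodup hnd S.nodup_toList]
  simpa using hmem

lemma valid_nonempty [DecidableEq X] {v w : X} {S : Finset X}
    (hv : v ∈ S) (hw : w ∈ S) (hvw : v ≠ w) : (valid v w S).Nonempty := by
  set l := ((S.erase v).erase w).toList with hl
  have hlnd : l.Nodup := Finset.nodup_toList _
  have hvl : v ∉ l := by simp [hl, Finset.mem_toList, Finset.mem_erase]
  have hwl : w ∉ l := by simp [hl, Finset.mem_toList, Finset.mem_erase]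
  refine ⟨v :: (l ++ [w]), rfl, ?_, ?_, ?_⟩
  · show ((v :: l) ++ [w]).getLast? = some w
    exact List.getLast?_concat
  · refine List.nodup_cons.mpr ⟨?_, ?_⟩
    · simp only [List.mem_append, List.mem_singleton]
      rintro (h | rfl)
      · exact hvl h
      · exact hvw rfl
    · rw [List.nodup_append]
      exact ⟨hlnd, List.nodup_singleton w, by
        intro x hx
        simp only [List.mem_singleton]
        rintro _ rfl rfl
        exact hwl hx⟩
  · intro x
    simp only [List.mem_cons, List.mem_append, List.mem_singleton, List.not_mem_nil,
      or_false, hl, Finset.mem_toList, Finset.mem_erase]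
    constructor
    · rintro (rfl | ⟨-, -, h⟩ | rfl) <;> assumption
    · intro hx
      by_cases h1 : x = v
      · exact Or.inl h1
      by_cases h2 : x = w
      · exact Or.inr (Or.inr h2)
      · exact Or.inr (Or.inl ⟨h2, h1, hx⟩)

lemma tourCost_mem (c : X → X → ℝ) {v w : X} {S : Finset X}
    (hne : (valid v w S).Nonempty) :
    ∃ p ∈ valid v w S, pathCost c p = tourCost c v w S := by
  have h := Set.Nonempty.csInf_mem (hne.image (pathCost c))
    ((valid_finite v w S).image _)
  obtain ⟨p, hp, he⟩ := h
  exact ⟨p, hp, he⟩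

lemma tourCost_le (c : X → X → ℝ) {v w : X} {S : Finset X} {p : List X}
    (hp : p ∈ valid v w S) : tourCost c v w S ≤ pathCost c p :=
  csInf_le ((valid_finite v w S).image _).bddBelow ⟨p, hp, rfl⟩

end TourAux

open TourAux in
/-- For finite `N̂` with `|N̂| ≥ 2`, `u ∉ N̂` and `w ∈ N̂`:
`C(u, w, N̂ ∪ {u}) = min over v ∈ N̂ \ {w} of (c(u,v) + C(v,w,N̂))`. -/
theorem tourCost_first_step {X : Type*} [DecidableEq X] (c : X → X → ℝ)
    (Nh : Finset X) (hN : 2 ≤ Nh.card) (u : X) (hu : u ∉ Nh) (w : X) (hw : w ∈ Nh) :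
    tourCost c u w (insert u Nh) =
      (Nh.erase w).inf'
        (by rw [← Finset.card_pos, Finset.card_erase_of_mem hw]; omega)
        (fun v => c u v + tourCost c v w Nh) := by
  have hwu : w ≠ u := fun h => hu (h ▸ hw)
  apply le_antisymm
  · apply Finset.le_inf'
    intro v hv
    obtain ⟨hvw, hvN⟩ := Finset.mem_erase.mp hv
    obtain ⟨p, hp, hcost⟩ := tourCost_mem c (valid_nonempty hvN hw hvw)
    obtain ⟨h1, h2, h3, h4⟩ := hp
    have hpne : p ≠ [] := by intro h; simp [h] at h1
    obtain ⟨b, t, rfl⟩ := List.exists_cons_of_ne_nil hpne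
    have hb : v = b := by simpa using h1.symm
    subst hb
    have huval : (u :: v :: t) ∈ valid u w (insert u Nh) := by
      refine ⟨rfl, ?_, ?_, ?_⟩
      · simpa using h2
      · exact List.nodup_cons.mpr ⟨fun h => hu ((h4 u).mp h), h3⟩
      · intro x
        simp only [List.mem_cons, Finset.mem_insert, ← h4 x, List.mem_cons]
    calc tourCost c u w (insert u Nh) ≤ pathCost c (u :: v :: t) :=
          tourCost_le c huval
      _ = c u v + pathCost c (v :: t) := rfl
      _ = c u v + tourCost c v w Nh := by rw [hcost]
  · obtain ⟨q, hq, hcost⟩ := tourCost_mem c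
      (valid_nonempty (Finset.mem_insert_self u Nh) (Finset.mem_insert_of_mem hw)
        (Ne.symm hwu))
    obtain ⟨h1, h2, h3, h4⟩ := hq
    have hqne : q ≠ [] := by intro h; simp [h] at h1
    obtain ⟨a, p, rfl⟩ := List.exists_cons_of_ne_nil hqne
    have ha : u = a := by simpa using h1.symm
    subst ha
    have hpne : p ≠ [] := by
      rintro rfl
      have : u = w := by simpa using h2
      exact hwu this.symm
    obtain ⟨v, t, rfl⟩ := List.exists_cons_of_ne_nil hpne
    -- q = u :: v :: t
    have h2' : (v :: t).getLast? = some w := by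
      rw [← List.getLast?_cons_cons]; exact h2
    have hvNh : v ∈ Nh := by
      have hvq : v ∈ u :: v :: t := by simp
      have := (h4 v).mp hvq
      rcases Finset.mem_insert.mp this with h | h
      · exfalso
        have : u ∉ v :: t := (List.nodup_cons.mp h3).1
        exact this (h ▸ (List.mem_cons_self : v ∈ v :: t))
      · exact h
    have htne : t ≠ [] := by
      rintro rfl
      have hvw' : v = w := by simpa using h2'
      subst hvw'
      have hsub : Nh ⊆ {v} := by
        intro x hx
        have := (h4 x).mpr (Finset.mem_insert_of_mem hx)
        simp only [List.mem_cons, List.not_mem_nil, or_false] at this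
        rcases this with rfl | rfl
        · exact absurd hx hu
        · simp
      have := Finset.card_le_card hsub
      simp at this
      omega
    have hwt : w ∈ t := by
      have hgl := List.getLast?_eq_getLast_of_ne_nil htne
      have : (v :: t).getLast? = t.getLast? := by
        cases t with
        | nil => exact absurd rfl htne
        | cons c s => exact List.getLast?_cons_cons ..
      rw [this, hgl, Option.some_inj] at h2'
      rw [← h2']
      exact List.getLast_mem htne
    have hvw : v ≠ w := by
      intro h
      have : v ∉ t := (List.nodup_cons.mp (List.nodup_cons.mp h3).2).1
      exact this (h ▸ hwt)
    have hpval : (v :: t) ∈ valid v w Nh := by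
      refine ⟨rfl, h2', (List.nodup_cons.mp h3).2, ?_⟩
      intro x
      constructor
      · intro hx
        have := (h4 x).mp (List.mem_cons_of_mem u hx)
        rcases Finset.mem_insert.mp this with h | h
        · exact absurd (h ▸ hx) (List.nodup_cons.mp h3).1
        · exact h
      · intro hx
        have := (h4 x).mpr (Finset.mem_insert_of_mem hx)
        rcases List.mem_cons.mp this with h | h
        · exact absurd hx (h ▸ hu)
        · exact h
    calc (Nh.erase w).inf' _ (fun v => c u v + tourCost c v w Nh)
        ≤ c u v + tourCost c v w Nh :=
          Finset.inf'_le _ (Finset.mem_erase.mpr ⟨hvw, hvNh⟩)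
      _ ≤ c u v + pathCost c (v :: t) :=
          add_le_add (le_refl _) (tourCost_le c hpval)
      _ = pathCost c (u :: v :: t) := rfl
      _ = tourCost c u w (insert u Nh) := hcost
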